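/- Let σ = (σ_1, …, σ_r) ∈ ℤ^r be a changemaker vector with σ_r ≥ 2, let L = ⟨σ⟩^⊥ ⊆ ℤ^r be the associated integer changemaker lattice, and let z ∈ L be irreducible. Then: (ii) if σ_k > 1 is not tight and A ⊆ {1, …, k−1} is any subset with σ_k = Σ_{i∈A} σ_i, then |z_k| ≤ Σ_{i∈A}(|z_i| + 1); and (iii) if σ_k is tight, then |z_k| ≤ 5 + Σ_{i=1}^{k−1}(|z_i| + 1). -/

import Mathlib

/-- The standard dot product on `ℤ^s`. -/
def dotInt {s : ℕ} (x y : Fin s → ℤ) : ℤ := ∑ i, x i * y i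

/-- `σ` is a changemaker vector: `σ 0 = 1` (the first coordinate, 1-based `σ_1`) and
`σ_{i-1} ≤ σ_i ≤ 1 + σ_1 + ⋯ + σ_{i-1}` for all later coordinates. -/
def IsChangemaker {r : ℕ} (σ : Fin r → ℤ) : Prop :=
  (∀ i : Fin r, i.val = 0 → σ i = 1) ∧
  ∀ i : Fin r, 0 < i.val →
    σ ⟨i.val - 1, lt_of_le_of_lt (Nat.sub_le _ _) i.isLt⟩ ≤ σ i ∧
    σ i ≤ 1 + ∑ j ∈ Finset.univ.filter (fun j : Fin r => j < i), σ j

/-- `v` is an obtuse superbase of the sublattice `L ⊆ ℤ^s`: all its members lie in `L`,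
they span `L` over `ℤ`, they have pairwise nonpositive dot products, and they sum to zero. -/
def IsObtuseSuperbase {s d : ℕ} (L : Set (Fin s → ℤ)) (v : Fin d → (Fin s → ℤ)) : Prop :=
  (∀ i, v i ∈ L) ∧
  (∀ x ∈ L, x ∈ Submodule.span ℤ (Set.range v)) ∧
  (∀ i j, i ≠ j → dotInt (v i) (v j) ≤ 0) ∧
  (∑ i, v i) = 0

/-- `v` is a nonzero vector of the changemaker lattice `⟨σ⟩^⊥` which is irreducible:
whenever `v = x + y` with `x, y` nonzero members of the lattice, `x · y ≤ -1`. -/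
def IsIrreducibleVec {r : ℕ} (σ : Fin r → ℤ) (v : Fin r → ℤ) : Prop :=
  v ≠ 0 ∧ ∀ x y : Fin r → ℤ, dotInt σ x = 0 → dotInt σ y = 0 → x ≠ 0 → y ≠ 0 →
    x + y = v → dotInt x y ≤ -1

/-- A changemaker vector is tight if some coefficient `σ_k` (with `k ≥ 2`, 1-based)
equals `1 + σ_1 + ⋯ + σ_{k-1}`. -/
def IsTightCM {r : ℕ} (σ : Fin r → ℤ) : Prop :=
  ∃ k : Fin r, 0 < k.val ∧
    σ k = 1 + ∑ j ∈ Finset.univ.filter (fun j : Fin r => j < k), σ j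

/-- A changemaker vector is very slack if its last coordinate is at least `2` and
`σ_k ≤ σ_1 + ⋯ + σ_{k-1} - 1` for every `k` with `σ_k > 1`. -/
def IsVerySlack {r : ℕ} (σ : Fin r → ℤ) : Prop :=
  IsChangemaker σ ∧ (∀ i : Fin r, i.val = r - 1 → 2 ≤ σ i) ∧
  ∀ k : Fin r, 1 < σ k →
    σ k ≤ (∑ j ∈ Finset.univ.filter (fun j : Fin r => j < k), σ j) - 1

section CMhelpers
variable {r : ℕ}

private lemma dot_sub (σ z y : Fin r → ℤ) : dotInt σ (z - y) = dotInt σ z - dotInt σ y := by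
  unfold dotInt
  rw [← Finset.sum_sub_distrib]
  exact Finset.sum_congr rfl fun j _ => by simp [Pi.sub_apply]; ring

private lemma dot_neg (σ z : Fin r → ℤ) : dotInt σ (-z) = - dotInt σ z := by
  unfold dotInt
  rw [← Finset.sum_neg_distrib]
  exact Finset.sum_congr rfl fun j _ => by simp

private lemma dot_neg_neg (x y : Fin r → ℤ) : dotInt (-x) (-y) = dotInt x y := by
  unfold dotInt
  exact Finset.sum_congr rfl fun j _ => by simp

private lemma irr_neg {σ z : Fin r → ℤ} (h : IsIrreducibleVec σ z) :
    IsIrreducibleVec σ (-z) := by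
  constructor
  · simpa using h.1
  · intro x y hx hy hx0 hy0 hxy
    have hxy' : (-x) + (-y) = z := by rw [← neg_add, hxy, neg_neg]
    have := h.2 (-x) (-y) (by rw [dot_neg, hx, neg_zero]) (by rw [dot_neg, hy, neg_zero])
      (by simpa using hx0) (by simpa using hy0) hxy'
    simpa [dot_neg_neg] using this

private lemma reducible_of_split (σ z y : Fin r → ℤ) (hz : dotInt σ z = 0)
    (hirr : IsIrreducibleVec σ z) (hyσ : dotInt σ y = 0) (hy0 : y ≠ 0) (hyz : y ≠ z)
    (hsum : 0 ≤ ∑ j, y j * (z j - y j)) : False := by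
  have hxσ : dotInt σ (z - y) = 0 := by rw [dot_sub, hz, hyσ, sub_zero]
  have hx0 : z - y ≠ 0 := sub_ne_zero_of_ne (Ne.symm hyz)
  have hadd : (z - y) + y = z := sub_add_cancel z y
  have hle := hirr.2 (z - y) y hxσ hyσ hx0 hy0 hadd
  have : dotInt (z - y) y = ∑ j, y j * (z j - y j) := by
    unfold dotInt
    exact Finset.sum_congr rfl fun j _ => by simp [Pi.sub_apply]; ring
  rw [this] at hle
  linarith

private lemma sum_decomp2 (g : Fin r → ℤ) (T : Finset (Fin r)) (t : Fin r)
    (htT : t ∉ T) (h0 : ∀ j, j ≠ t → j ∉ T → g j = 0) :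
    ∑ j, g j = g t + ∑ j ∈ T, g j := by
  rw [← Finset.sum_subset (Finset.subset_univ (insert t T))
    (fun x _ hx => h0 x (fun h => hx (by simp [h])) (fun h => hx (Finset.mem_insert_of_mem h)))]
  rw [Finset.sum_insert htT]

private lemma sum_decomp3 (g : Fin r → ℤ) (T : Finset (Fin r)) (t u : Fin r)
    (htu : t ≠ u) (htT : t ∉ T) (huT : u ∉ T)
    (h0 : ∀ j, j ≠ t → j ≠ u → j ∉ T → g j = 0) :
    ∑ j, g j = g t + (g u + ∑ j ∈ T, g j) := by
  rw [sum_decomp2 g (insert u T) t (by simp [htu, htT])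
    (fun j h1 h2 => h0 j h1 (fun e => h2 (by simp [e])) (fun e => h2 (Finset.mem_insert_of_mem e)))]
  rw [Finset.sum_insert huT]

private lemma sigma_one {σ : Fin r → ℤ} (hcm : IsChangemaker σ) (i : Fin r) : 1 ≤ σ i := by
  have key : ∀ n : ℕ, ∀ i : Fin r, i.val = n → 1 ≤ σ i := by
    intro n
    induction n with
    | zero => intro i h; rw [hcm.1 i h]
    | succ m ih =>
      intro i h
      have h1 : 0 < i.val := by omega
      have h2 := (hcm.2 i h1).1
      have h3 : (⟨i.val - 1, lt_of_le_of_lt (Nat.sub_le _ _) i.isLt⟩ : Fin r).val = m := by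
        simp [h]
      exact le_trans (ih _ h3) h2
  exact key i.val i rfl

private lemma sigma_mono {σ : Fin r → ℤ} (hcm : IsChangemaker σ) :
    ∀ i j : Fin r, i ≤ j → σ i ≤ σ j := by
  have key : ∀ n : ℕ, ∀ j : Fin r, j.val = n → ∀ i : Fin r, i ≤ j → σ i ≤ σ j := by
    intro n
    induction n with
    | zero =>
      intro j hj i hij
      have : i = j := by
        apply Fin.ext
        have := Fin.le_def.mp hij
        omega
      rw [this]
    | succ m ih =>
      intro j hj i hij
      rcases eq_or_ne i j with rfl | hne
      · exact le_refl _
      · have h1 : 0 < j.val := by omega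
        have h2 := (hcm.2 j h1).1
        set j' : Fin r := ⟨j.val - 1, lt_of_le_of_lt (Nat.sub_le _ _) j.isLt⟩ with hj'
        have hj'v : j'.val = m := by simp [hj', hj]
        have hij' : i ≤ j' := by
          rw [Fin.le_def]
          have hlt : i.val < j.val := by
            have := Fin.le_def.mp hij
            have : i.val ≠ j.val := fun h => hne (Fin.ext h)
            omega
          simp [hj']
          omega
        exact le_trans (ih j' hj'v i hij') h2
  intro i j hij
  exact key j.val j rfl i hij

private lemma sigma_le {σ : Fin r → ℤ} (hcm : IsChangemaker σ) (i : Fin r) :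
    σ i ≤ 1 + ∑ j ∈ Finset.univ.filter (fun j : Fin r => j < i), σ j := by
  rcases Nat.eq_zero_or_pos i.val with h | h
  · rw [hcm.1 i h]
    have : 0 ≤ ∑ j ∈ Finset.univ.filter (fun j : Fin r => j < i), σ j :=
      Finset.sum_nonneg fun j _ => le_trans zero_le_one (sigma_one hcm j)
    linarith
  · exact (hcm.2 i h).2




private lemma cm_rep (σ n : Fin r → ℤ) :
    ∀ T : Finset (Fin r), (∀ i ∈ T, 1 ≤ σ i) → (∀ i ∈ T, 1 ≤ n i) →
    (∀ i ∈ T, σ i ≤ 1 + ∑ j ∈ T.filter (fun j => j < i), σ j * n j) →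
    ∀ R : ℤ, 0 ≤ R → R ≤ ∑ j ∈ T, σ j * n j →
    ∃ c : Fin r → ℤ, (∀ j, j ∉ T → c j = 0) ∧ (∀ j ∈ T, 0 ≤ c j ∧ c j ≤ n j) ∧
      ∑ j ∈ T, σ j * c j = R := by
  intro T
  induction T using Finset.strongInduction with
  | _ T ih =>
    intro hσ hn hch R hR0 hRc
    rcases T.eq_empty_or_nonempty with rfl | hne
    · refine ⟨0, fun j _ => rfl, fun j hj => absurd hj (Finset.notMem_empty j), ?_⟩
      simp at hRc ⊢
      omega
    · set i := T.max' hne with hi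
      have hiT : i ∈ T := T.max'_mem hne
      have hσi : 1 ≤ σ i := hσ i hiT
      have hσi0 : (0:ℤ) < σ i := by linarith
      set q : ℤ := min (n i) (R / σ i) with hq
      have hq0 : 0 ≤ q := le_min (by linarith [hn i hiT]) (Int.ediv_nonneg hR0 (by linarith))
      have hqn : q ≤ n i := min_le_left _ _
      have hem := Int.mul_ediv_add_emod R (σ i)  -- σ i * (R / σ i) + R % σ i = R
      have hemn : 0 ≤ R % σ i := Int.emod_nonneg R (by linarith)
      have hkey : σ i * q ≤ R := by
        have h1 : σ i * q ≤ σ i * (R / σ i) :=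
          mul_le_mul_of_nonneg_left (min_le_right _ _) (by linarith)
        linarith
      set R' := R - σ i * q with hR'
      have hR'0 : 0 ≤ R' := by simp [hR']; linarith
      set T' := T.erase i with hT'
      have hss : T' ⊂ T := Finset.erase_ssubset hiT
      have hmaxlt : ∀ j ∈ T', j < i := by
        intro j hj
        rcases Finset.mem_erase.mp hj with ⟨hne', hjT⟩
        exact lt_of_le_of_ne (T.le_max' j hjT) hne'
      have hfilt : ∀ j ∈ T', T'.filter (fun x => x < j) = T.filter (fun x => x < j) := by
        intro j hj
        apply Finset.ext
        intro x
        simp only [Finset.mem_filter, Finset.mem_erase, hT']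
        constructor
        · rintro ⟨⟨_, hx⟩, hlt⟩; exact ⟨hx, hlt⟩
        · rintro ⟨hx, hlt⟩
          refine ⟨⟨?_, hx⟩, hlt⟩
          rintro rfl
          exact absurd (lt_trans hlt (hmaxlt j hj)) (lt_irrefl _)
      have hcap' : R' ≤ ∑ j ∈ T', σ j * n j := by
        have hsplit : ∑ j ∈ T', σ j * n j + σ i * n i = ∑ j ∈ T, σ j * n j :=
          Finset.sum_erase_add T _ hiT
        by_cases hc : n i ≤ R / σ i
        · have : q = n i := min_eq_left hc
          rw [hR', this]
          linarith
        · have hq2 : q = R / σ i := min_eq_right (le_of_not_ge hc)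
          have : R' = R % σ i := by rw [hR', hq2]; linarith
          rw [this]
          have h2 := hch i hiT
          have hfi : T.filter (fun x => x < i) ⊆ T' := by
            intro x hx
            rcases Finset.mem_filter.mp hx with ⟨hxT, hxi⟩
            exact Finset.mem_erase.mpr ⟨ne_of_lt hxi, hxT⟩
          have h3 : ∑ j ∈ T.filter (fun x => x < i), σ j * n j ≤ ∑ j ∈ T', σ j * n j := by
            apply Finset.sum_le_sum_of_subset_of_nonneg hfi
            intro j hj _
            have hjT := Finset.mem_erase.mp hj
            exact mul_nonneg (by linarith [hσ j hjT.2]) (by linarith [hn j hjT.2])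
          have h4 : R % σ i < σ i := Int.emod_lt_of_pos R hσi0
          linarith
      obtain ⟨c', hc'0, hc'b, hc'sum⟩ := ih T' hss
        (fun j hj => hσ j (Finset.mem_erase.mp hj).2)
        (fun j hj => hn j (Finset.mem_erase.mp hj).2)
        (by
          intro j hj
          rw [hfilt j hj]
          exact hch j (Finset.mem_erase.mp hj).2)
        R' hR'0 hcap'
      refine ⟨fun j => if j = i then q else c' j, ?_, ?_, ?_⟩
      · intro j hj
        have hne2 : j ≠ i := fun h => hj (h ▸ hiT)
        simp only [if_neg hne2]
        exact hc'0 j (fun h => hj (Finset.mem_of_mem_erase h))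
      · intro j hj
        by_cases hje : j = i
        · subst hje; simp [hq0, hqn]
        · simp only [if_neg hje]
          exact hc'b j (Finset.mem_erase.mpr ⟨hje, hj⟩)
      · have hsplit : ∑ j ∈ T', σ j * (if j = i then q else c' j) + σ i * (if i = i then q else c' i)
            = ∑ j ∈ T, σ j * (if j = i then q else c' j) :=
          Finset.sum_erase_add T _ hiT
        have h5 : ∑ j ∈ T', σ j * (if j = i then q else c' j) = ∑ j ∈ T', σ j * c' j := by
          apply Finset.sum_congr rfl
          intro j hj
          rw [if_neg (Finset.mem_erase.mp hj).1]
        rw [← hsplit, h5, hc'sum]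
        simp [hR']


end CMhelpers

section Aux
variable {r : ℕ}

private lemma part2_aux (σ z : Fin r → ℤ) (hz : dotInt σ z = 0)
    (hirr : IsIrreducibleVec σ z) (k : Fin r) (hσk : 1 < σ k)
    (A : Finset (Fin r)) (hA : ∀ i ∈ A, i < k) (hsum : σ k = ∑ i ∈ A, σ i) :
    z k ≤ ∑ i ∈ A, (|z i| + 1) := by
  by_contra hlt
  push_neg at hlt
  set B : ℤ := ∑ i ∈ A, (|z i| + 1) with hB
  have hkA : k ∉ A := fun h => absurd (hA k h) (lt_irrefl k)
  have hAne : A.Nonempty := by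
    rcases A.eq_empty_or_nonempty with rfl | h
    · simp at hsum; omega
    · exact h
  have hB1 : 1 ≤ B := by
    obtain ⟨i0, hi0⟩ := hAne
    have h := Finset.single_le_sum (f := fun i => |z i| + 1)
      (fun j _ => by linarith [abs_nonneg (z j)]) hi0
    have := abs_nonneg (z i0)
    rw [hB]
    linarith
  classical
  set y : Fin r → ℤ := fun j => if j = k then 1 else if j ∈ A then -1 else 0 with hy
  have hyk : y k = 1 := by simp [hy]
  have hyA : ∀ j ∈ A, y j = -1 := by
    intro j hj
    have : j ≠ k := fun h => hkA (h ▸ hj)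
    simp [hy, this, hj]
  have hy0 : ∀ j, j ≠ k → j ∉ A → y j = 0 := by
    intro j h1 h2; simp [hy, h1, h2]
  have hyσ : dotInt σ y = 0 := by
    unfold dotInt
    rw [sum_decomp2 (fun j => σ j * y j) A k hkA
      (fun j h1 h2 => by show σ j * y j = 0; rw [hy0 j h1 h2, mul_zero])]
    rw [hyk, mul_one]
    have : ∑ j ∈ A, σ j * y j = ∑ j ∈ A, -σ j := by
      apply Finset.sum_congr rfl
      intro j hj; rw [hyA j hj]; ring
    rw [this, Finset.sum_neg_distrib, ← hsum]
    ring
  have hyne0 : y ≠ 0 := by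
    intro h
    have := congrFun h k
    rw [hyk] at this
    simp at this
  have hynez : y ≠ z := by
    intro h
    have := congrFun h k
    rw [hyk] at this
    omega
  apply reducible_of_split σ z y hz hirr hyσ hyne0 hynez
  rw [sum_decomp2 (fun j => y j * (z j - y j)) A k hkA
    (fun j h1 h2 => by show y j * (z j - y j) = 0; rw [hy0 j h1 h2, zero_mul])]
  rw [hyk]
  have h1 : ∑ j ∈ A, y j * (z j - y j) = ∑ j ∈ A, -(z j + 1) := by
    apply Finset.sum_congr rfl
    intro j hj; rw [hyA j hj]; ring
  rw [h1, Finset.sum_neg_distrib]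
  have h2 : ∑ j ∈ A, (z j + 1) ≤ B := by
    rw [hB]
    apply Finset.sum_le_sum
    intro j _
    have := le_abs_self (z j)
    linarith
  linarith

set_option maxHeartbeats 2000000 in
private lemma part3_aux (σ z : Fin r → ℤ) (hr : 0 < r) (hcm : IsChangemaker σ)
    (hz : dotInt σ z = 0) (hirr : IsIrreducibleVec σ z)
    (t : Fin r) (ht0 : 0 < t.val)
    (htight : σ t = 1 + ∑ j ∈ Finset.univ.filter (fun j : Fin r => j < t), σ j) :
    z t ≤ 5 + ∑ j ∈ Finset.univ.filter (fun j : Fin r => j < t), (|z j| + 1) := by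
  classical
  by_contra hlt
  push_neg at hlt
  set Low := Finset.univ.filter (fun j : Fin r => j < t) with hLow
  set SB := ∑ j ∈ Low, (|z j| + 1) with hSB
  have hSB0 : 0 ≤ SB :=
    Finset.sum_nonneg fun j _ => by linarith [abs_nonneg (z j)]
  have hzt6 : 6 ≤ z t := by linarith
  have h0t : (⟨0, hr⟩ : Fin r) < t := by
    rw [Fin.lt_def]; exact ht0
  have h0Low : (⟨0, hr⟩ : Fin r) ∈ Low := by
    rw [hLow]; simp [h0t]
  have hσ0 : σ ⟨0, hr⟩ = 1 := hcm.1 _ rfl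
  have hLowσ1 : 1 ≤ ∑ j ∈ Low, σ j := by
    have h := Finset.single_le_sum (f := fun j => σ j)
      (fun j _ => le_trans zero_le_one (sigma_one hcm j)) h0Low
    rw [hσ0] at h
    exact h
  have hσt2 : 2 ≤ σ t := by rw [htight]; linarith
  by_cases hcase : ∃ m ∈ Low, z m ≤ 2
  · -- CASE 1
    obtain ⟨m, hmLow, hzm⟩ := hcase
    have hmt : m < t := by
      have := Finset.mem_filter.mp hmLow
      exact this.2
    have hmnet : m ≠ t := ne_of_lt hmt
    set Tm := Finset.univ.filter (fun j : Fin r => j < m) with hTm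
    have hchainm : ∀ i ∈ Tm, σ i ≤ 1 + ∑ j ∈ Tm.filter (fun j => j < i), σ j * (fun _ : Fin r => (1:ℤ)) j := by
      intro i hi
      have him : i < m := by
        have := Finset.mem_filter.mp hi
        exact this.2
      have hbase := sigma_le hcm i
      have hseteq : Tm.filter (fun j => j < i) = Finset.univ.filter (fun j : Fin r => j < i) := by
        ext x
        simp only [hTm, Finset.mem_filter, Finset.mem_univ, true_and]
        exact ⟨fun h => h.2, fun h => ⟨lt_trans h him, h⟩⟩
      rw [hseteq]
      have heq1 : ∑ j ∈ Finset.univ.filter (fun j : Fin r => j < i), σ j * (fun _ : Fin r => (1:ℤ)) j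
          = ∑ j ∈ Finset.univ.filter (fun j : Fin r => j < i), σ j := by
        apply Finset.sum_congr rfl
        intro j _; simp
      rw [heq1]
      exact hbase
    have hcapm : σ m - 1 ≤ ∑ j ∈ Tm, σ j * (fun _ : Fin r => (1:ℤ)) j := by
      have hbase := sigma_le hcm m
      have heq1 : ∑ j ∈ Tm, σ j * (fun _ : Fin r => (1:ℤ)) j = ∑ j ∈ Tm, σ j := by
        apply Finset.sum_congr rfl
        intro j _; simp
      rw [heq1, hTm]
      linarith
    obtain ⟨c, hc0, hcb, hcsum⟩ := cm_rep σ (fun _ => (1:ℤ)) Tm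
      (fun i _ => sigma_one hcm i) (fun i _ => le_refl 1)
      hchainm (σ m - 1) (by linarith [sigma_one hcm m]) hcapm
    set T1 := Low.erase m with hT1
    set y : Fin r → ℤ := fun j => if j = t then 1 else if j = m then -2 else if j < t then c j - 1 else 0 with hy
    have hyt : y t = 1 := by simp [hy]
    have hym : y m = -2 := by simp [hy, hmnet]
    have hyT1 : ∀ j ∈ T1, y j = c j - 1 := by
      intro j hj
      rcases Finset.mem_erase.mp hj with ⟨hjm, hjLow⟩
      have hjt : j < t := by
        have := Finset.mem_filter.mp hjLow
        exact this.2
      simp [hy, ne_of_lt hjt, hjm, hjt]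
    have hyout : ∀ j, j ≠ t → j ≠ m → j ∉ T1 → y j = 0 := by
      intro j h1 h2 h3
      have hjnlt : ¬ j < t := by
        intro hjt
        apply h3
        apply Finset.mem_erase.mpr
        refine ⟨h2, ?_⟩
        rw [hLow]; simp [hjt]
      simp [hy, h1, h2, hjnlt]
    have htnm : t ≠ m := hmnet.symm
    have htT1 : t ∉ T1 := by
      intro h
      have := (Finset.mem_erase.mp h).2
      rw [hLow] at this
      have := (Finset.mem_filter.mp this).2
      exact absurd this (lt_irrefl t)
    have hmT1 : m ∉ T1 := Finset.notMem_erase m Low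
    -- sum of σ j * c j over T1
    have hsubm : Tm ⊆ T1 := by
      intro x hx
      have hxm : x < m := by
        have := Finset.mem_filter.mp hx
        exact this.2
      apply Finset.mem_erase.mpr
      refine ⟨ne_of_lt hxm, ?_⟩
      rw [hLow]
      simp [lt_trans hxm hmt]
    have hσc : ∑ j ∈ T1, σ j * c j = σ m - 1 := by
      rw [← hcsum]
      symm
      apply Finset.sum_subset hsubm
      intro x _ hx
      rw [hc0 x hx, mul_zero]
    have hσT1 : ∑ j ∈ T1, σ j + σ m = ∑ j ∈ Low, σ j :=
      Finset.sum_erase_add Low σ hmLow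
    have hyσ : dotInt σ y = 0 := by
      unfold dotInt
      rw [sum_decomp3 (fun j => σ j * y j) T1 t m htnm htT1 hmT1
        (fun j h1 h2 h3 => by show σ j * y j = 0; rw [hyout j h1 h2 h3, mul_zero])]
      have hT1eq : ∑ j ∈ T1, σ j * y j = ∑ j ∈ T1, (σ j * c j - σ j) := by
        apply Finset.sum_congr rfl
        intro j hj
        rw [hyT1 j hj]; ring
      rw [hyt, hym, hT1eq, Finset.sum_sub_distrib, hσc]
      rw [htight]
      linarith
    have hyne0 : y ≠ 0 := by
      intro h
      have := congrFun h t
      rw [hyt] at this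
      simp at this
    have hynez : y ≠ z := by
      intro h
      have := congrFun h t
      rw [hyt] at this
      omega
    apply reducible_of_split σ z y hz hirr hyσ hyne0 hynez
    rw [sum_decomp3 (fun j => y j * (z j - y j)) T1 t m htnm htT1 hmT1
      (fun j h1 h2 h3 => by show y j * (z j - y j) = 0; rw [hyout j h1 h2 h3, zero_mul])]
    rw [hyt, hym]
    have hterm : ∀ j ∈ T1, -(|z j| + 1) ≤ y j * (z j - y j) := by
      intro j hj
      rw [hyT1 j hj]
      have hcj : 0 ≤ c j ∧ c j ≤ 1 := by
        by_cases hjTm : j ∈ Tm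
        · exact hcb j hjTm
        · rw [hc0 j hjTm]; exact ⟨le_refl 0, zero_le_one⟩
      have : c j = 0 ∨ c j = 1 := by omega
      rcases this with h | h <;> rw [h]
      · have := le_abs_self (z j)
        nlinarith [abs_nonneg (z j)]
      · have := abs_nonneg (z j)
        nlinarith
    have hsumT1 : -(∑ j ∈ T1, (|z j| + 1)) ≤ ∑ j ∈ T1, y j * (z j - y j) := by
      rw [← Finset.sum_neg_distrib]
      exact Finset.sum_le_sum hterm
    have hT1abs : ∑ j ∈ T1, (|z j| + 1) + (|z m| + 1) = SB := by
      rw [hSB]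
      exact Finset.sum_erase_add Low _ hmLow
    rcases abs_cases (z m) with ⟨habs, _⟩ | ⟨habs, _⟩ <;> nlinarith
  · -- CASE 2
    push_neg at hcase
    have hall : ∀ m : Fin r, m < t → 3 ≤ z m := by
      intro m hm
      have hmLow : m ∈ Low := by rw [hLow]; simp [hm]
      have := hcase m hmLow
      omega
    set s := Finset.univ.filter (fun i : Fin r => t < i ∧ z i ≤ 2) with hs
    have hsne : s.Nonempty := by
      by_contra hempty
      rw [Finset.not_nonempty_iff_eq_empty] at hempty
      have hforall : ∀ i : Fin r, t < i → 3 ≤ z i := by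
        intro i hi
        by_contra hzi
        have : i ∈ s := by rw [hs]; simp; constructor; exact hi; omega
        rw [hempty] at this
        exact absurd this (Finset.notMem_empty i)
      have hpos : 0 < ∑ j, σ j * z j := by
        apply Finset.sum_pos
        · intro j _
          have hσj := sigma_one hcm j
          rcases lt_trichotomy j t with h | h | h
          · have := hall j h; nlinarith
          · subst h; nlinarith
          · have := hforall j h; nlinarith
        · exact ⟨t, Finset.mem_univ t⟩
      unfold dotInt at hz
      linarith
    set u := s.min' hsne with hu
    have huS : u ∈ s := s.min'_mem hsne
    have htu : t < u := by
      have := Finset.mem_filter.mp huS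
      exact this.2.1
    have hzu : z u ≤ 2 := by
      have := Finset.mem_filter.mp huS
      exact this.2.2
    have hmid : ∀ i : Fin r, t < i → i < u → 3 ≤ z i := by
      intro i h1 h2
      by_contra hzi
      have hiS : i ∈ s := by rw [hs]; simp; constructor; exact h1; omega
      have := s.min'_le i hiS
      rw [← hu] at this
      exact absurd h2 (not_lt_of_ge this)
    have hσut : σ t ≤ σ u := sigma_mono hcm t u (le_of_lt htu)
    have hσt0 : (0:ℤ) < σ t := by linarith
    set k := min (σ u / σ t) (z t / 2) with hk
    have hdiv1 : 1 ≤ σ u / σ t := by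
      rw [Int.le_ediv_iff_mul_le hσt0]
      linarith
    have hdiv2 : 3 ≤ z t / 2 := by
      rw [Int.le_ediv_iff_mul_le (by norm_num : (0:ℤ) < 2)]
      linarith
    have hk1 : 1 ≤ k := le_min hdiv1 (by linarith)
    have hk2 : k ≤ z t / 2 := min_le_right _ _
    have hzt2 : 2 * (z t / 2) ≤ z t := by
      have h1 := Int.mul_ediv_add_emod (z t) 2
      have h2 := Int.emod_nonneg (z t) (by norm_num : (2:ℤ) ≠ 0)
      linarith
    have hk3 : 3 ≤ z t - k := by linarith
    have hkσ : k * σ t ≤ σ u := by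
      have h1 : k ≤ σ u / σ t := min_le_left _ _
      have h2 := Int.mul_ediv_add_emod (σ u) (σ t)
      have h3 := Int.emod_nonneg (σ u) (ne_of_gt hσt0)
      have h4 : k * σ t ≤ (σ u / σ t) * σ t :=
        mul_le_mul_of_nonneg_right h1 (le_of_lt hσt0)
      have h5 : (σ u / σ t) * σ t = σ t * (σ u / σ t) := mul_comm _ _
      linarith
    set rem := σ u - k * σ t with hrem
    have hrem0 : 0 ≤ rem := by rw [hrem]; linarith
    set T := Finset.univ.filter (fun i : Fin r => i < u ∧ ¬ i = t) with hT
    have hTmem : ∀ i : Fin r, i ∈ T ↔ (i < u ∧ i ≠ t) := by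
      intro i
      rw [hT]
      simp
    have hTz : ∀ i ∈ T, 3 ≤ z i := by
      intro i hi
      rcases (hTmem i).mp hi with ⟨h1, h2⟩
      rcases lt_trichotomy i t with h | h | h
      · exact hall i h
      · exact absurd h h2
      · exact hmid i h h1
    have hLowT : Low ⊆ T := by
      intro x hx
      have hxt : x < t := by
        have := Finset.mem_filter.mp hx
        exact this.2
      exact (hTmem x).mpr ⟨lt_trans hxt htu, ne_of_lt hxt⟩
    have hTnn : ∀ j ∈ T, (0:ℤ) ≤ σ j * z j := by
      intro j hj
      have := sigma_one hcm j
      have := hTz j hj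
      nlinarith
    have hchain2 : ∀ i ∈ T, σ i ≤ 1 + ∑ j ∈ T.filter (fun j => j < i), σ j * z j := by
      intro i hi
      rcases (hTmem i).mp hi with ⟨hiu, hit⟩
      have hbase := sigma_le hcm i
      rcases lt_or_gt_of_ne hit with hlt2 | hgt2
      · -- i < t
        have hseteq : T.filter (fun j => j < i) = Finset.univ.filter (fun j : Fin r => j < i) := by
          ext x
          simp only [Finset.mem_filter, Finset.mem_univ, true_and, hT]
          constructor
          · rintro ⟨_, h⟩; exact h
          · intro h
            have hxt : x < t := lt_trans h hlt2
            exact ⟨⟨lt_trans hxt htu, fun he => absurd (he ▸ hxt) (lt_irrefl t)⟩, h⟩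
        rw [hseteq]
        have hge : ∑ j ∈ Finset.univ.filter (fun j : Fin r => j < i), σ j
            ≤ ∑ j ∈ Finset.univ.filter (fun j : Fin r => j < i), σ j * z j := by
          apply Finset.sum_le_sum
          intro j hj
          have hji : j < i := (Finset.mem_filter.mp hj).2
          have h3 := hall j (lt_trans hji hlt2)
          have h4 := sigma_one hcm j
          nlinarith
        linarith
      · -- t < i
        have hins : Finset.univ.filter (fun j : Fin r => j < i)
            = insert t (T.filter (fun j => j < i)) := by
          ext x
          simp only [Finset.mem_filter, Finset.mem_univ, true_and, Finset.mem_insert, hT]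
          constructor
          · intro hxi
            by_cases hxt : x = t
            · left; exact hxt
            · right; exact ⟨⟨lt_trans hxi hiu, hxt⟩, hxi⟩
          · rintro (rfl | ⟨⟨_, _⟩, h⟩)
            · exact hgt2
            · exact h
        have htnotin : t ∉ T.filter (fun j => j < i) := by
          simp [hT]
        have hsum2 : ∑ j ∈ Finset.univ.filter (fun j : Fin r => j < i), σ j
            = σ t + ∑ j ∈ T.filter (fun j => j < i), σ j := by
          rw [hins, Finset.sum_insert htnotin]
        have hLowsub : Low ⊆ T.filter (fun j => j < i) := by
          intro x hx
          have hxt : x < t := by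
            have := Finset.mem_filter.mp hx
            exact this.2
          apply Finset.mem_filter.mpr
          exact ⟨(hTmem x).mpr ⟨lt_trans hxt htu, ne_of_lt hxt⟩, lt_trans hxt hgt2⟩
        have hdiff : ∑ j ∈ T.filter (fun j => j < i), (σ j * z j - σ j)
            ≥ ∑ j ∈ Low, (σ j * z j - σ j) := by
          apply Finset.sum_le_sum_of_subset_of_nonneg hLowsub
          intro j hj _
          have hjT : j ∈ T := (Finset.mem_filter.mp hj).1
          have := hTz j hjT
          have := sigma_one hcm j
          nlinarith
        have hLowdiff : ∑ j ∈ Low, (σ j * z j - σ j) ≥ ∑ j ∈ Low, 2 * σ j := by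
          have : ∀ j ∈ Low, 2 * σ j ≤ σ j * z j - σ j := by
            intro j hj
            have hjt : j < t := by
              have := Finset.mem_filter.mp hj
              exact this.2
            have := hall j hjt
            have := sigma_one hcm j
            nlinarith
          exact Finset.sum_le_sum this
        have hLow2 : ∑ j ∈ Low, 2 * σ j = 2 * ∑ j ∈ Low, σ j := by
          rw [Finset.mul_sum]
        rw [hLow2] at hLowdiff
        have hexpand : ∑ j ∈ T.filter (fun j => j < i), (σ j * z j - σ j)
            = ∑ j ∈ T.filter (fun j => j < i), σ j * z j
              - ∑ j ∈ T.filter (fun j => j < i), σ j := Finset.sum_sub_distrib _ _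
        rw [hsum2] at hbase
        linarith [htight]
    have hcap2 : rem ≤ ∑ j ∈ T, σ j * z j := by
      have hLowcap : ∑ j ∈ Low, σ j ≤ ∑ j ∈ T, σ j * z j := by
        have h1 : ∑ j ∈ Low, σ j ≤ ∑ j ∈ Low, σ j * z j := by
          apply Finset.sum_le_sum
          intro j hj
          have hjt : j < t := by
            have := Finset.mem_filter.mp hj
            exact this.2
          have := hall j hjt
          have := sigma_one hcm j
          nlinarith
        have h2 : ∑ j ∈ Low, σ j * z j ≤ ∑ j ∈ T, σ j * z j :=
          Finset.sum_le_sum_of_subset_of_nonneg hLowT (fun j hj _ => hTnn j hj)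
        linarith
      by_cases hmin : σ u / σ t ≤ z t / 2
      · have hkeq : k = σ u / σ t := min_eq_left hmin
        have hremmod : rem = σ u % σ t := by
          have h2 := Int.mul_ediv_add_emod (σ u) (σ t)
          have h5 : (σ u / σ t) * σ t = σ t * (σ u / σ t) := mul_comm _ _
          rw [hrem, hkeq]
          linarith
        have h4 : σ u % σ t < σ t := Int.emod_lt_of_pos _ hσt0
        rw [hremmod]
        linarith [htight]
      · have hkeq : k = z t / 2 := min_eq_right (le_of_not_ge hmin)
        have hσusum := sigma_le hcm u
        have hins : Finset.univ.filter (fun j : Fin r => j < u) = insert t T := by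
          ext x
          simp only [Finset.mem_filter, Finset.mem_univ, true_and, Finset.mem_insert, hT]
          constructor
          · intro hxu
            by_cases hxt : x = t
            · left; exact hxt
            · right; exact ⟨hxu, hxt⟩
          · rintro (rfl | ⟨h, _⟩)
            · exact htu
            · exact h
        have htnT' : t ∉ T := by simp [hT]
        have hsumu : ∑ j ∈ Finset.univ.filter (fun j : Fin r => j < u), σ j
            = σ t + ∑ j ∈ T, σ j := by
          rw [hins, Finset.sum_insert htnT']
        have h3σt : 3 * σ t ≤ (z t / 2) * σ t :=
          mul_le_mul_of_nonneg_right hdiv2 (le_of_lt hσt0)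
        have hTσ : ∑ j ∈ T, σ j ≤ ∑ j ∈ T, σ j * z j := by
          apply Finset.sum_le_sum
          intro j hj
          have := hTz j hj
          have := sigma_one hcm j
          nlinarith
        rw [hrem, hkeq]
        rw [hsumu] at hσusum
        linarith
    obtain ⟨c, hc0, hcb, hcsum⟩ := cm_rep σ z T
      (fun i _ => sigma_one hcm i) (fun i hi => by linarith [hTz i hi])
      hchain2 rem hrem0 hcap2
    have hunt : u ≠ t := (ne_of_lt htu).symm
    set y : Fin r → ℤ := fun j => if j = t then k else if j = u then -1 else c j with hy
    have hyt : y t = k := by simp [hy]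
    have hyu : y u = -1 := by simp [hy, hunt]
    have hyT : ∀ j ∈ T, y j = c j := by
      intro j hj
      rcases (hTmem j).mp hj with ⟨h1, h2⟩
      simp [hy, h2, ne_of_lt h1]
    have hyout : ∀ j, j ≠ t → j ≠ u → j ∉ T → y j = 0 := by
      intro j h1 h2 h3
      simp [hy, h1, h2]
      exact hc0 j h3
    have htnu : t ≠ u := ne_of_lt htu
    have htnT : t ∉ T := by simp [hT]
    have hunT : u ∉ T := by
      intro h
      exact absurd ((hTmem u).mp h).1 (lt_irrefl u)
    have hyσ : dotInt σ y = 0 := by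
      unfold dotInt
      rw [sum_decomp3 (fun j => σ j * y j) T t u htnu htnT hunT
        (fun j h1 h2 h3 => by show σ j * y j = 0; rw [hyout j h1 h2 h3, mul_zero])]
      have hTeq : ∑ j ∈ T, σ j * y j = ∑ j ∈ T, σ j * c j := by
        apply Finset.sum_congr rfl
        intro j hj
        rw [hyT j hj]
      rw [hyt, hyu, hTeq, hcsum, hrem]
      ring
    have hyne0 : y ≠ 0 := by
      intro h
      have := congrFun h u
      rw [hyu] at this
      simp at this
    have hynez : y ≠ z := by
      intro h
      have := congrFun h t
      rw [hyt] at this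
      omega
    apply reducible_of_split σ z y hz hirr hyσ hyne0 hynez
    rw [sum_decomp3 (fun j => y j * (z j - y j)) T t u htnu htnT hunT
      (fun j h1 h2 h3 => by show y j * (z j - y j) = 0; rw [hyout j h1 h2 h3, zero_mul])]
    rw [hyt, hyu]
    have hTsum : 0 ≤ ∑ j ∈ T, y j * (z j - y j) := by
      apply Finset.sum_nonneg
      intro j hj
      rw [hyT j hj]
      rcases hcb j hj with ⟨h1, h2⟩
      have := hTz j hj
      nlinarith
    have hkgain : 3 ≤ k * (z t - k) := by
      have h1 : (1:ℤ) * (z t - k) ≤ k * (z t - k) :=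
        mul_le_mul_of_nonneg_right hk1 (by linarith)
      linarith
    linarith

end Aux

theorem irreducible_coefficient_bounds
    (r : ℕ) (hr : 0 < r) (σ : Fin r → ℤ) (hcm : IsChangemaker σ)
    (hlast : ∀ i : Fin r, i.val = r - 1 → 2 ≤ σ i)
    (z : Fin r → ℤ) (hz : dotInt σ z = 0) (hirr : IsIrreducibleVec σ z) :
    (∀ k : Fin r, 1 < σ k →
      σ k ≠ 1 + ∑ j ∈ Finset.univ.filter (fun j : Fin r => j < k), σ j →
      ∀ A : Finset (Fin r), (∀ i ∈ A, i < k) → σ k = ∑ i ∈ A, σ i →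
        |z k| ≤ ∑ i ∈ A, (|z i| + 1)) ∧
    (∀ k : Fin r, 0 < k.val →
      σ k = 1 + ∑ j ∈ Finset.univ.filter (fun j : Fin r => j < k), σ j →
      |z k| ≤ 5 + ∑ j ∈ Finset.univ.filter (fun j : Fin r => j < k), (|z j| + 1)) := by
  constructor
  · intro k hσk _ A hA hsum
    have h1 := part2_aux σ z hz hirr k hσk A hA hsum
    have h2 := part2_aux σ (-z) (by rw [dot_neg, hz, neg_zero]) (irr_neg hirr) k hσk A hA hsum
    simp only [Pi.neg_apply, abs_neg] at h2
    exact abs_le.mpr ⟨by linarith, h1⟩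
  · intro k hk0 htight
    have h1 := part3_aux σ z hr hcm hz hirr k hk0 htight
    have h2 := part3_aux σ (-z) hr hcm (by rw [dot_neg, hz, neg_zero]) (irr_neg hirr) k hk0 htight
    simp only [Pi.neg_apply, abs_neg] at h2
    exact abs_le.mpr ⟨by linarith, h1⟩
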